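/- If β_λ > 1, β_p > 1 and β_c > 1, then there exists a constant C > 0 (depending only on β_λ, β_p, β_c) such that for all integers N ≥ 2 and all integers u_λ ≥ 1 and 1 ≤ u_p, u_c ≤ √N, the heavy-tailed (1+(λ,λ)) GA maximizing LeadingOnes on {0,1}^N satisfies E[T_I] ≤ C·N², where T_I is the first iteration index t ≥ 0 at which the current solution x_t is the all-ones string. -/

import Mathlib

open Finset
open scoped ENNReal Classical

/-- Probability mass function of the power-law distribution `pow(β,u)` on `[1..u]`:
`Pr[X = i] = C_{β,u} · i^(-β)` for `i ∈ [1..u]`, where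
`C_{β,u} = (∑_{j=1}^{u} j^(-β))⁻¹`. -/
noncomputable def powMass (β : ℝ) (u : ℕ) (i : ℕ) : ℝ≥0∞ :=
  if i ∈ Finset.Icc 1 u then
    ENNReal.ofReal ((∑ j ∈ Finset.Icc 1 u, (j : ℝ) ^ (-β))⁻¹ * (i : ℝ) ^ (-β))
  else 0

/-- Probability mass function of the binomial distribution `Bin(N,p)`. -/
noncomputable def binomMass (N : ℕ) (p : ℝ) (ℓ : ℕ) : ℝ≥0∞ :=
  if ℓ ≤ N then ENNReal.ofReal ((N.choose ℓ : ℝ) * p ^ ℓ * (1 - p) ^ (N - ℓ)) else 0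

/-- Probability mass at `z` of a mutation offspring of `x`: flip the bits of `x`
in a uniformly random `ℓ`-element set of positions.  The offspring `z` arises iff
it differs from `x` in exactly `ℓ` positions, and then with probability
`1 / (N choose ℓ)`. -/
noncomputable def mutMass {N : ℕ} (x : Fin N → Bool) (ℓ : ℕ) (z : Fin N → Bool) : ℝ≥0∞ :=
  if (Finset.univ.filter fun i => z i ≠ x i).card = ℓ then ((N.choose ℓ : ℝ≥0∞))⁻¹ else 0

/-- Probability mass at `z` of a crossover offspring of `x` and `x'` with crossover
bias `c`: independently for every position, take the bit of `x'` with probability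
`c` and the bit of `x` with probability `1 - c`. -/
noncomputable def crossMass {N : ℕ} (x x' : Fin N → Bool) (c : ℝ) (z : Fin N → Bool) : ℝ≥0∞ :=
  ∏ i : Fin N,
    ((if z i = x' i then ENNReal.ofReal c else 0) +
      (if z i = x i then ENNReal.ofReal (1 - c) else 0))

/-- Probability mass at `z` of the winner among `lam` independent samples from the
mass function `q`, where a winner is an offspring of maximal `f`-value, ties broken
uniformly at random. -/
noncomputable def bestOfMass {σ : Type*} [Fintype σ] (f : σ → ℝ) (lam : ℕ)
    (q : σ → ℝ≥0∞) (z : σ) : ℝ≥0∞ :=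
  ∑' w : Fin lam → σ, (∏ j, q (w j)) *
    (((Finset.univ.filter fun j => w j = z ∧ ∀ j', f (w j') ≤ f (w j)).card : ℝ≥0∞) /
      ((Finset.univ.filter fun j => ∀ j', f (w j') ≤ f (w j)).card : ℝ≥0∞))

/-- Transition probability of one iteration of the heavy-tailed `(1+(λ,λ))` GA
maximizing `f : {0,1}^N → ℝ` with hyperparameters `βl, ul, βp, up, βc, uc`, from
current solution `x` to next solution `y`: sample `P ~ pow(βp,up)`,
`Q ~ pow(βc,uc)`, `λ ~ pow(βl,ul)` independently, set `p = P/√N`, `c = Q/√N`,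
sample `ℓ ~ Bin(N,p)`; create `λ` mutation offspring (each flipping a fresh
uniformly random `ℓ`-element set of bits of `x`) and let `x'` be a best one (ties
uniform); create `λ` crossover offspring of `x` and `x'` with bias `c` and let
`yw` be a best one (ties uniform); accept `yw` iff `f(yw) ≥ f(x)`. -/
noncomputable def gaStep (N : ℕ) (βl βp βc : ℝ) (ul up uc : ℕ)
    (f : (Fin N → Bool) → ℝ) (x y : Fin N → Bool) : ℝ≥0∞ :=
  ∑' (P : ℕ) (Q : ℕ) (lam : ℕ) (ℓ : ℕ),
    powMass βp up P * powMass βc uc Q * powMass βl ul lam *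
      binomMass N ((P : ℝ) / Real.sqrt N) ℓ *
      ∑' x' : Fin N → Bool, bestOfMass f lam (mutMass x ℓ) x' *
        ∑' yw : Fin N → Bool,
          bestOfMass f lam (crossMass x x' ((Q : ℝ) / Real.sqrt N)) yw *
            (if f x ≤ f yw then (if y = yw then 1 else 0) else (if y = x then 1 else 0))

/-- Distribution of the current solution `x_t` of the heavy-tailed `(1+(λ,λ))` GA
after `t` iterations: `x_0` is uniformly random in `{0,1}^N`, and each iteration
performs `gaStep`. -/
noncomputable def gaMarginal (N : ℕ) (βl βp βc : ℝ) (ul up uc : ℕ)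
    (f : (Fin N → Bool) → ℝ) : ℕ → (Fin N → Bool) → ℝ≥0∞
  | 0 => fun _ => ((2 : ℝ≥0∞) ^ N)⁻¹
  | t + 1 => fun y =>
      ∑' x : Fin N → Bool, gaMarginal N βl βp βc ul up uc f t x * gaStep N βl βp βc ul up uc f x y

/-- Expected number of iterations `E[T_I]` until the current solution of the GA
lies in the (absorbing) set of good solutions, computed as
`∑_{t≥0} Pr[x_t not good]`. -/
noncomputable def gaExpectedIterations (N : ℕ) (βl βp βc : ℝ) (ul up uc : ℕ)
    (f : (Fin N → Bool) → ℝ) (good : (Fin N → Bool) → Prop) : ℝ≥0∞ :=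
  ∑' t : ℕ, ∑' x : Fin N → Bool,
    if good x then 0 else gaMarginal N βl βp βc ul up uc f t x

/-- The LeadingOnes fitness: the number of leading one-bits of `x ∈ {0,1}^N`. -/
noncomputable def leadingOnes (N : ℕ) (x : Fin N → Bool) : ℝ :=
  ((Finset.univ.filter fun i => ∀ j : Fin N, j ≤ i → x j = true).card : ℝ)

/-! ### Auxiliary development -/

section Aux

noncomputable def Zb (β : ℝ) : ℝ := ∑' n : ℕ, (n : ℝ) ^ (-β)

lemma Zb_summable {β : ℝ} (hβ : 1 < β) : Summable (fun n : ℕ => (n : ℝ) ^ (-β)) := by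
  rw [Real.summable_nat_rpow]; linarith

lemma sum_Icc_le_Zb {β : ℝ} (hβ : 1 < β) (u : ℕ) :
    ∑ j ∈ Icc 1 u, (j : ℝ) ^ (-β) ≤ Zb β :=
  Summable.sum_le_tsum _ (fun i _ => Real.rpow_nonneg (Nat.cast_nonneg i) _) (Zb_summable hβ)

lemma one_le_sum_Icc {β : ℝ} (u : ℕ) (hu : 1 ≤ u) :
    1 ≤ ∑ j ∈ Icc 1 u, (j : ℝ) ^ (-β) := by
  have h1 : (1 : ℕ) ∈ Icc 1 u := by simp [hu]
  have := Finset.single_le_sum (f := fun j : ℕ => (j : ℝ) ^ (-β))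
    (fun i _ => Real.rpow_nonneg (Nat.cast_nonneg i) _) h1
  simpa using this

lemma one_le_Zb {β : ℝ} (hβ : 1 < β) : 1 ≤ Zb β :=
  le_trans (one_le_sum_Icc 1 le_rfl) (sum_Icc_le_Zb hβ 1)

lemma powMass_tsum_le_one (β : ℝ) (u : ℕ) : ∑' i, powMass β u i ≤ 1 := by
  rw [tsum_eq_sum (s := Icc 1 u) (by intro b hb; simp [powMass, hb])]
  have hnn : ∀ i ∈ Icc 1 u, 0 ≤ (∑ j ∈ Icc 1 u, (j : ℝ) ^ (-β))⁻¹ * (i : ℝ) ^ (-β) := by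
    intro i _
    exact mul_nonneg (inv_nonneg.2 (Finset.sum_nonneg fun j _ =>
      Real.rpow_nonneg (Nat.cast_nonneg j) _)) (Real.rpow_nonneg (Nat.cast_nonneg i) _)
  calc ∑ i ∈ Icc 1 u, powMass β u i
      = ENNReal.ofReal (∑ i ∈ Icc 1 u,
          (∑ j ∈ Icc 1 u, (j : ℝ) ^ (-β))⁻¹ * (i : ℝ) ^ (-β)) := by
        rw [ENNReal.ofReal_sum_of_nonneg hnn]
        exact Finset.sum_congr rfl fun i hi => by simp [powMass, hi]
    _ ≤ 1 := by
        rw [← Finset.mul_sum]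
        have : (∑ j ∈ Icc 1 u, (j : ℝ) ^ (-β))⁻¹ * (∑ j ∈ Icc 1 u, (j : ℝ) ^ (-β)) ≤ 1 :=
          inv_mul_le_one
        calc ENNReal.ofReal _ ≤ ENNReal.ofReal 1 := ENNReal.ofReal_le_ofReal this
          _ = 1 := ENNReal.ofReal_one

lemma le_powMass_one {β : ℝ} (hβ : 1 < β) {u : ℕ} (hu : 1 ≤ u) :
    ENNReal.ofReal (Zb β)⁻¹ ≤ powMass β u 1 := by
  have h1 : (1 : ℕ) ∈ Icc 1 u := by simp [hu]
  simp only [powMass, if_pos h1, Nat.cast_one, Real.one_rpow, mul_one]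
  apply ENNReal.ofReal_le_ofReal
  apply inv_anti₀
  · linarith [one_le_sum_Icc (β := β) u hu]
  · exact sum_Icc_le_Zb hβ u

lemma binomMass_tsum_le_one {N : ℕ} {p : ℝ} (h0 : 0 ≤ p) (h1 : p ≤ 1) :
    ∑' ℓ, binomMass N p ℓ ≤ 1 := by
  rw [tsum_eq_sum (s := range (N + 1)) (by
    intro b hb
    simp only [Finset.mem_range, not_lt] at hb
    simp [binomMass, Nat.not_le.2 hb] )]
  have hnn : ∀ ℓ ∈ range (N + 1), 0 ≤ (N.choose ℓ : ℝ) * p ^ ℓ * (1 - p) ^ (N - ℓ) := by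
    intro ℓ _
    exact mul_nonneg (mul_nonneg (Nat.cast_nonneg _) (pow_nonneg h0 _))
      (pow_nonneg (by linarith) _)
  calc ∑ ℓ ∈ range (N + 1), binomMass N p ℓ
      = ENNReal.ofReal (∑ ℓ ∈ range (N + 1), (N.choose ℓ : ℝ) * p ^ ℓ * (1 - p) ^ (N - ℓ)) := by
        rw [ENNReal.ofReal_sum_of_nonneg hnn]
        refine Finset.sum_congr rfl fun ℓ hℓ => ?_
        rw [Finset.mem_range] at hℓ
        simp [binomMass, Nat.lt_succ_iff.1 hℓ]
    _ ≤ 1 := by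
        have : ∑ ℓ ∈ range (N + 1), (N.choose ℓ : ℝ) * p ^ ℓ * (1 - p) ^ (N - ℓ) = 1 := by
          have := add_pow p (1 - p) N
          simp only [add_sub_cancel, one_pow] at this
          have h2 : ∑ ℓ ∈ range (N + 1), (N.choose ℓ : ℝ) * p ^ ℓ * (1 - p) ^ (N - ℓ)
              = ∑ m ∈ range (N + 1), p ^ m * (1 - p) ^ (N - m) * (N.choose m : ℝ) :=
            Finset.sum_congr rfl fun ℓ _ => by ring
          rw [h2]
          exact this.symm
        rw [this, ENNReal.ofReal_one]

lemma sum_mul_choose_succ (M : ℕ) (a q : ℝ) :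
    ∑ ℓ ∈ range (M + 2), (ℓ : ℝ) * ((M + 1).choose ℓ) * a ^ ℓ * q ^ (M + 1 - ℓ)
      = (M + 1) * a * (a + q) ^ M := by
  rw [Finset.sum_range_succ']
  simp only [Nat.cast_zero, zero_mul]
  have hc : ∀ i : ℕ, ((i : ℝ) + 1) * (((M + 1).choose (i + 1)) : ℝ)
      = ((M : ℝ) + 1) * ((M.choose i) : ℝ) := by
    intro i
    have h := Nat.add_one_mul_choose_eq M i
    have h2 := congrArg (fun n : ℕ => (n : ℝ)) h
    push_cast at h2
    linear_combination -h2
  have h2 : ∀ i ∈ range (M + 1),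
      (((i + 1 : ℕ)) : ℝ) * (((M + 1).choose (i + 1)) : ℝ) * a ^ (i + 1) * q ^ (M + 1 - (i + 1))
        = ((M : ℝ) + 1) * a * (((M.choose i) : ℝ) * a ^ i * q ^ (M - i)) := by
    intro i hi
    rw [show M + 1 - (i + 1) = M - i from by omega]
    push_cast
    linear_combination (a ^ (i + 1) * q ^ (M - i)) * hc i
  rw [Finset.sum_congr rfl h2, ← Finset.mul_sum, add_zero]
  congr 1
  rw [add_pow]
  exact Finset.sum_congr rfl fun k _ => by ring

lemma sum_mul_choose (N : ℕ) (hN : 1 ≤ N) (a q : ℝ) :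
    ∑ ℓ ∈ range (N + 1), (ℓ : ℝ) * (N.choose ℓ) * a ^ ℓ * q ^ (N - ℓ)
      = N * a * (a + q) ^ (N - 1) := by
  obtain ⟨M, rfl⟩ : ∃ M, N = M + 1 := ⟨N - 1, by omega⟩
  have h := sum_mul_choose_succ M a q
  have e1 : M + 1 + 1 = M + 2 := rfl
  have e2 : M + 1 - 1 = M := rfl
  rw [e2]
  push_cast
  rw [show M + 1 + 1 = M + 2 from rfl] at h ⊢
  convert h using 2 <;> push_cast <;> ring

lemma one_add_inv_pow_le_four {n : ℕ} (hn : 1 ≤ n) : (1 + 1 / (n : ℝ)) ^ n ≤ 4 := by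
  have hnp : (0 : ℝ) < n := by exact_mod_cast hn
  have h1 : (1 + 1 / (n : ℝ)) ≤ Real.exp (1 / n) := by
    have := Real.add_one_le_exp (1 / (n : ℝ))
    linarith
  have h2 : (1 + 1 / (n : ℝ)) ^ n ≤ Real.exp (1 / n) ^ n :=
    pow_le_pow_left₀ (by positivity) h1 n
  calc (1 + 1 / (n : ℝ)) ^ n ≤ Real.exp (1 / n) ^ n := h2
    _ = Real.exp (n * (1 / n)) := by rw [← Real.exp_nat_mul]
    _ = Real.exp 1 := by rw [mul_one_div, div_self (ne_of_gt hnp)]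
    _ ≤ 4 := by linarith [Real.exp_one_lt_d9]

lemma pow_frac_ge_quarter {n : ℕ} (hn : 1 ≤ n) :
    (1 / 4 : ℝ) ≤ ((n : ℝ) / ((n : ℝ) + 1)) ^ n := by
  have hnp : (0 : ℝ) < n := by exact_mod_cast hn
  have hb : ((n : ℝ) / ((n : ℝ) + 1)) * (1 + 1 / n) = 1 := by
    field_simp
  have hprod : ((n : ℝ) / ((n : ℝ) + 1)) ^ n * (1 + 1 / (n : ℝ)) ^ n = 1 := by
    rw [← mul_pow, hb, one_pow]
  have h4 := one_add_inv_pow_le_four hn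
  have hpos : (0 : ℝ) ≤ ((n : ℝ) / ((n : ℝ) + 1)) ^ n := by positivity
  nlinarith

/-- The key real computation: expected improvement probability `≥ 1/(16N)`. -/
lemma key_real_sum (N : ℕ) (hN : 2 ≤ N) :
    1 / (16 * (N : ℝ)) ≤ ∑ ℓ ∈ range (N + 1),
      (N.choose ℓ : ℝ) * (1 / Real.sqrt N) ^ ℓ * (1 - 1 / Real.sqrt N) ^ (N - ℓ) *
        ((ℓ : ℝ) / N * (1 / Real.sqrt N * (1 - 1 / Real.sqrt N) ^ ℓ)) := by
  have hNp : (0 : ℝ) < N := by positivity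
  have hsq : (0 : ℝ) < Real.sqrt N := Real.sqrt_pos.2 hNp
  set c : ℝ := 1 / Real.sqrt N with hc
  have hc0 : 0 < c := by positivity
  have hcsq : c ^ 2 = 1 / N := by
    rw [hc, div_pow, one_pow, Real.sq_sqrt (le_of_lt hNp)]
  have hc34 : c ≤ 3 / 4 := by
    rw [hc, div_le_div_iff₀ hsq (by norm_num)]
    have h2 : Real.sqrt 2 ≤ Real.sqrt N := Real.sqrt_le_sqrt (by exact_mod_cast hN)
    have h43 : (4 : ℝ) / 3 ≤ Real.sqrt 2 := by
      rw [show (4 : ℝ) / 3 = Real.sqrt ((4 / 3) ^ 2) from by rw [Real.sqrt_sq (by norm_num)]]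
      exact Real.sqrt_le_sqrt (by norm_num)
    linarith
  have hc1 : c < 1 := by linarith
  have hsum_eq : ∑ ℓ ∈ range (N + 1),
      (N.choose ℓ : ℝ) * c ^ ℓ * (1 - c) ^ (N - ℓ) * ((ℓ : ℝ) / N * (c * (1 - c) ^ ℓ))
      = c / N * ∑ ℓ ∈ range (N + 1),
          (ℓ : ℝ) * (N.choose ℓ) * (c * (1 - c)) ^ ℓ * (1 - c) ^ (N - ℓ) := by
    rw [Finset.mul_sum]
    refine Finset.sum_congr rfl fun ℓ _ => ?_
    rw [mul_pow]
    ring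
  rw [hsum_eq, sum_mul_choose N (by omega) (c * (1 - c)) (1 - c)]
  rw [show c * (1 - c) + (1 - c) = 1 - c ^ 2 from by ring, hcsq]
  have h1 : ((N - 1 : ℕ) : ℝ) = (N : ℝ) - 1 := by
    have := Nat.cast_sub (R := ℝ) (show 1 ≤ N from by omega)
    simpa using this
  have hD : (1 - 1 / (N : ℝ)) = ((N - 1 : ℕ) : ℝ) / (((N - 1 : ℕ) : ℝ) + 1) := by
    rw [h1, sub_add_cancel]
    field_simp
  rw [hD]
  have hq := pow_frac_ge_quarter (n := N - 1) (by omega)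
  set D := (((N - 1 : ℕ) : ℝ) / (((N - 1 : ℕ) : ℝ) + 1)) ^ (N - 1) with hDdef
  have hD0 : (0 : ℝ) ≤ D := by positivity
  have h1c : (1 : ℝ) / 4 ≤ 1 - c := by linarith
  have h116 : (1 : ℝ) / 16 ≤ (1 - c) * D := by nlinarith
  have heq : c / (N : ℝ) * ((N : ℝ) * (c * (1 - c)) * D) = (1 - c) * D * c ^ 2 := by
    field_simp
  rw [heq, hcsq]
  calc 1 / (16 * (N : ℝ)) = (1 / 16) * (1 / N) := by ring
    _ ≤ ((1 - c) * D) * (1 / N) := by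
        apply mul_le_mul_of_nonneg_right h116 (by positivity)

section Mass

variable {N : ℕ}

lemma cross_factor_sum (x x' : Fin N → Bool) {c : ℝ} (hc0 : 0 ≤ c) (hc1 : c ≤ 1) (i : Fin N) :
    ∑ b : Bool, ((if b = x' i then ENNReal.ofReal c else 0) +
      (if b = x i then ENNReal.ofReal (1 - c) else 0)) = 1 := by
  rw [Finset.sum_add_distrib]
  have h1 : ∑ b : Bool, (if b = x' i then ENNReal.ofReal c else 0) = ENNReal.ofReal c := by
    simp
  have h2 : ∑ b : Bool, (if b = x i then ENNReal.ofReal (1 - c) else 0)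
      = ENNReal.ofReal (1 - c) := by simp
  rw [h1, h2, ← ENNReal.ofReal_add hc0 (by linarith)]
  norm_num

lemma crossMass_sum (x x' : Fin N → Bool) {c : ℝ} (hc0 : 0 ≤ c) (hc1 : c ≤ 1) :
    ∑ z : Fin N → Bool, crossMass x x' c z = 1 := by
  unfold crossMass
  rw [← Fintype.piFinset_univ, ← Finset.prod_univ_sum (t := fun _ : Fin N => (univ : Finset Bool))
    (f := fun i b => (if b = x' i then ENNReal.ofReal c else 0) +
      (if b = x i then ENNReal.ofReal (1 - c) else 0))]
  rw [Finset.prod_congr rfl fun i _ => cross_factor_sum x x' hc0 hc1 i]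
  simp

lemma mutMass_sum_le (x : Fin N → Bool) (ℓ : ℕ) :
    ∑ z : Fin N → Bool, mutMass x ℓ z ≤ 1 := by
  unfold mutMass
  rw [← Finset.sum_filter]
  rw [Finset.sum_const]
  have hcard : (univ.filter fun z : Fin N → Bool =>
      (univ.filter fun i => z i ≠ x i).card = ℓ).card ≤ N.choose ℓ := by
    have := Finset.card_le_card_of_injOn
      (f := fun z : Fin N → Bool => univ.filter fun i => z i ≠ x i)
      (s := univ.filter fun z : Fin N → Bool => (univ.filter fun i => z i ≠ x i).card = ℓ)
      (t := Finset.powersetCard ℓ (univ : Finset (Fin N)))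
      (by
        intro z hz
        rw [Finset.mem_coe, Finset.mem_filter] at hz
        rw [Finset.mem_coe, Finset.mem_powersetCard]
        exact ⟨Finset.filter_subset _ _, hz.2⟩)
      (by
        intro z1 _ z2 _ he
        have he' : (univ.filter fun i => z1 i ≠ x i) = (univ.filter fun i => z2 i ≠ x i) := he
        funext i
        have hi : (i ∈ univ.filter fun i => z1 i ≠ x i) ↔
            (i ∈ univ.filter fun i => z2 i ≠ x i) := by rw [he']
        simp only [Finset.mem_filter, Finset.mem_univ, true_and] at hi
        cases hz1 : z1 i <;> cases hz2 : z2 i <;> (try rfl) <;> cases hx : x i <;> simp_all)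
    rwa [Finset.card_powersetCard, Finset.card_univ, Fintype.card_fin] at this
  rcases Nat.eq_zero_or_pos (N.choose ℓ) with h0 | hpos
  · have h0' : (univ.filter fun z : Fin N → Bool =>
        (univ.filter fun i => z i ≠ x i).card = ℓ).card = 0 :=
      Nat.le_zero.mp (h0 ▸ hcard)
    rw [h0']
    simp
  · calc ((univ.filter fun z : Fin N → Bool =>
        (univ.filter fun i => z i ≠ x i).card = ℓ).card : ℕ) •
          ((N.choose ℓ : ℝ≥0∞))⁻¹
        = ((univ.filter fun z : Fin N → Bool =>
            (univ.filter fun i => z i ≠ x i).card = ℓ).card : ℝ≥0∞) *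
          ((N.choose ℓ : ℝ≥0∞))⁻¹ := by rw [nsmul_eq_mul]
      _ ≤ (N.choose ℓ : ℝ≥0∞) * ((N.choose ℓ : ℝ≥0∞))⁻¹ := by
          apply mul_le_mul_left
          exact_mod_cast Nat.cast_le.2 hcard
      _ = 1 := ENNReal.mul_inv_cancel (by exact_mod_cast hpos.ne') (by simp)

lemma bestOfMass_sum_le {σ : Type*} [Fintype σ] (f : σ → ℝ) (lam : ℕ) (q : σ → ℝ≥0∞)
    (hq : ∑ z : σ, q z ≤ 1) : ∑ z : σ, bestOfMass f lam q z ≤ 1 := by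
  unfold bestOfMass
  simp only [tsum_fintype]
  rw [Finset.sum_comm]
  have hw : ∀ w : Fin lam → σ,
      ∑ z : σ, (∏ j, q (w j)) *
        (((univ.filter fun j => w j = z ∧ ∀ j', f (w j') ≤ f (w j)).card : ℝ≥0∞) /
          ((univ.filter fun j => ∀ j', f (w j') ≤ f (w j)).card : ℝ≥0∞))
      ≤ ∏ j, q (w j) := by
    intro w
    rw [← Finset.mul_sum]
    have hnum : ∑ z : σ, ((univ.filter fun j => w j = z ∧ ∀ j', f (w j') ≤ f (w j)).card : ℝ≥0∞)
        = ((univ.filter fun j => ∀ j', f (w j') ≤ f (w j)).card : ℝ≥0∞) := by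
      have : ∑ z : σ, (univ.filter fun j => w j = z ∧ ∀ j', f (w j') ≤ f (w j)).card
          = (univ.filter fun j => ∀ j', f (w j') ≤ f (w j)).card := by
        simp only [Finset.card_filter]
        rw [Finset.sum_comm]
        refine Finset.sum_congr rfl fun j _ => ?_
        by_cases hP : ∀ j', f (w j') ≤ f (w j) <;> simp [hP]
      exact_mod_cast congrArg (fun n : ℕ => (n : ℝ≥0∞)) this
    have hdiv : ∑ z : σ,
        (((univ.filter fun j => w j = z ∧ ∀ j', f (w j') ≤ f (w j)).card : ℝ≥0∞) /
          ((univ.filter fun j => ∀ j', f (w j') ≤ f (w j)).card : ℝ≥0∞))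
        = (∑ z : σ, ((univ.filter fun j => w j = z ∧ ∀ j', f (w j') ≤ f (w j)).card : ℝ≥0∞)) /
          ((univ.filter fun j => ∀ j', f (w j') ≤ f (w j)).card : ℝ≥0∞) := by
      simp only [div_eq_mul_inv, Finset.sum_mul]
    rw [hdiv, hnum]
    calc (∏ j, q (w j)) * (((univ.filter fun j => ∀ j', f (w j') ≤ f (w j)).card : ℝ≥0∞) /
          ((univ.filter fun j => ∀ j', f (w j') ≤ f (w j)).card : ℝ≥0∞))
        ≤ (∏ j, q (w j)) * 1 := by
          apply mul_le_mul_right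
          exact ENNReal.div_self_le_one
      _ = ∏ j, q (w j) := mul_one _
  refine le_trans (Finset.sum_le_sum fun w _ => hw w) ?_
  have : ∑ w : Fin lam → σ, ∏ j, q (w j) = ∏ _j : Fin lam, ∑ z : σ, q z := by
    rw [← Fintype.piFinset_univ, ← Finset.prod_univ_sum (t := fun _ : Fin lam => (univ : Finset σ))
      (f := fun _ b => q b)]
  rw [this]
  exact Finset.prod_le_one (fun _ _ => zero_le) (fun _ _ => hq)

lemma bestOfMass_one {σ : Type*} [Fintype σ] (f : σ → ℝ) (q : σ → ℝ≥0∞) (z : σ) :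
    bestOfMass f 1 q z = q z := by
  unfold bestOfMass
  rw [tsum_fintype]
  rw [Fintype.sum_equiv (Equiv.funUnique (Fin 1) σ)
    _ (fun a : σ => q a * (if a = z then 1 else 0))
    (fun w => by
      have hw : ∀ j : Fin 1, w j = w default := fun j => by
        congr 1
        exact Subsingleton.elim _ _
      have h1 : (univ.filter fun j : Fin 1 => ∀ j', f (w j') ≤ f (w j)) = univ := by
        apply Finset.filter_true_of_mem
        intro j _ j'
        rw [hw j', hw j]
      have h2 : (univ.filter fun j : Fin 1 => w j = z ∧ ∀ j', f (w j') ≤ f (w j))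
          = univ.filter fun j : Fin 1 => w j = z := by
        apply Finset.filter_congr
        intro j _
        constructor
        · exact fun h => h.1
        · exact fun h => ⟨h, fun j' => by rw [hw j', hw j]⟩
      rw [h1, h2]
      simp only [Equiv.funUnique_apply]
      have h3 : (univ.filter fun j : Fin 1 => w j = z) = if w default = z then univ else ∅ := by
        split_ifs with h
        · apply Finset.filter_true_of_mem
          intro j _
          rw [hw j]; exact h
        · apply Finset.filter_false_of_mem
          intro j _
          rw [hw j]; exact h
      rw [h3]
      have h4 : ∏ j : Fin 1, q (w j) = q (w default) := by
        rw [Fin.prod_univ_one]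
        rw [hw 0]
      rw [h4]
      split_ifs with h
      · simp
      · simp)]
  simp

end Mass

section Struct

variable {N : ℕ}

/-- The integer leading-ones value. -/
def lv (N : ℕ) (x : Fin N → Bool) : ℕ :=
  (Finset.univ.filter fun i => ∀ j : Fin N, j ≤ i → x j = true).card

lemma lv_le (x : Fin N → Bool) : lv N x ≤ N := by
  calc lv N x ≤ (univ : Finset (Fin N)).card := Finset.card_filter_le _ _
    _ = N := by rw [Finset.card_univ, Fintype.card_fin]

lemma lv_eq_iff_ones (x : Fin N → Bool) : lv N x = N ↔ x = fun _ => true := by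
  constructor
  · intro h
    funext i
    have huniv : (Finset.univ.filter fun i => ∀ j : Fin N, j ≤ i → x j = true)
        = univ := by
      apply Finset.eq_univ_of_card
      show lv N x = Fintype.card (Fin N)
      rw [h, Fintype.card_fin]
    have hi : i ∈ Finset.univ.filter fun i => ∀ j : Fin N, j ≤ i → x j = true := by
      rw [huniv]; exact Finset.mem_univ i
    rw [Finset.mem_filter] at hi
    exact hi.2 i le_rfl
  · intro h
    subst h
    have : (Finset.univ.filter fun i : Fin N => ∀ j : Fin N, j ≤ i → true = true)
        = univ := Finset.filter_true_of_mem (fun i _ => fun j _ => rfl)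
    rw [lv, this, Finset.card_univ, Fintype.card_fin]

lemma exists_first_zero (x : Fin N → Bool) (hx : x ≠ fun _ => true) :
    ∃ κ : Fin N, x κ = false ∧ (∀ j, j < κ → x j = true) ∧ lv N x = κ.val := by
  have hne : (univ.filter fun i : Fin N => x i = false).Nonempty := by
    rw [Finset.filter_nonempty_iff]
    by_contra hcon
    push_neg at hcon
    apply hx
    funext i
    have := hcon i (Finset.mem_univ i)
    cases h : x i
    · exact absurd h this
    · rfl
  set κ := (univ.filter fun i : Fin N => x i = false).min' hne with hκ
  have hκmem := (univ.filter fun i : Fin N => x i = false).min'_mem hne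
  rw [Finset.mem_filter] at hκmem
  refine ⟨κ, hκmem.2, ?_, ?_⟩
  · intro j hj
    by_contra hcon
    have hj' : j ∈ univ.filter fun i : Fin N => x i = false := by
      rw [Finset.mem_filter]
      refine ⟨Finset.mem_univ j, ?_⟩
      cases h : x j
      · rfl
      · exact absurd h hcon
    have := Finset.min'_le _ j hj'
    exact absurd this (not_le.2 hj)
  · have hset : (Finset.univ.filter fun i : Fin N => ∀ j : Fin N, j ≤ i → x j = true)
        = Finset.Iio κ := by
      ext i
      simp only [Finset.mem_filter, Finset.mem_univ, true_and, Finset.mem_Iio]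
      constructor
      · intro h
        by_contra hcon
        push_neg at hcon
        have := h κ hcon
        rw [hκmem.2] at this
        exact Bool.false_ne_true this
      · intro h j hj
        by_contra hcon
        have hj' : j ∈ univ.filter fun i : Fin N => x i = false := by
          rw [Finset.mem_filter]
          refine ⟨Finset.mem_univ j, ?_⟩
          cases hh : x j
          · rfl
          · exact absurd hh hcon
        have := Finset.min'_le _ j hj'
        have : κ ≤ j := this
        exact absurd (lt_of_le_of_lt (le_trans this hj) h) (lt_irrefl κ)
    rw [lv, hset, Fin.card_Iio]

lemma lv_ge_of_prefix (z : Fin N → Bool) (κ : Fin N) (h : ∀ j, j ≤ κ → z j = true) :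
    κ.val + 1 ≤ lv N z := by
  have hsub : Finset.Iic κ ⊆ Finset.univ.filter fun i => ∀ j : Fin N, j ≤ i → z j = true := by
    intro i hi
    rw [Finset.mem_Iic] at hi
    rw [Finset.mem_filter]
    exact ⟨Finset.mem_univ i, fun j hj => h j (le_trans hj hi)⟩
  calc κ.val + 1 = (Finset.Iic κ).card := (Fin.card_Iic κ).symm
    _ ≤ _ := Finset.card_le_card hsub

lemma cross_lower (x x' : Fin N → Bool) {c : ℝ} (hc0 : 0 ≤ c) (hc1 : c ≤ 1)
    (κ : Fin N) (hxκ : x κ = false) (hxlt : ∀ j, j < κ → x j = true)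
    (hx'κ : x' κ = true) (ℓ : ℕ)
    (hcard : (univ.filter fun i => x' i ≠ x i).card ≤ ℓ) :
    ENNReal.ofReal (c * (1 - c) ^ ℓ) ≤
      ∑ z ∈ univ.filter (fun z : Fin N → Bool => ∀ j, j ≤ κ → z j = true),
        crossMass x x' c z := by
  classical
  set t : Fin N → Finset Bool := fun i => if i ≤ κ then {true} else univ with ht
  have hpi : Fintype.piFinset t
      = univ.filter (fun z : Fin N → Bool => ∀ j, j ≤ κ → z j = true) := by
    ext z
    rw [Fintype.mem_piFinset, Finset.mem_filter]
    simp only [ht]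
    constructor
    · intro h
      refine ⟨Finset.mem_univ z, fun j hj => ?_⟩
      have := h j
      rw [if_pos hj] at this
      simpa using this
    · intro h i
      by_cases hi : i ≤ κ
      · rw [if_pos hi]
        simp [h.2 i hi]
      · rw [if_neg hi]
        exact Finset.mem_univ _
  rw [← hpi]
  unfold crossMass
  rw [← Finset.prod_univ_sum (t := t)
    (f := fun i b => (if b = x' i then ENNReal.ofReal c else 0) +
      (if b = x i then ENNReal.ofReal (1 - c) else 0))]
  -- lower bound the product factorwise
  set G : Fin N → ℝ≥0∞ := fun i => if i = κ then ENNReal.ofReal c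
    else if x' i ≠ x i ∧ i < κ then ENNReal.ofReal (1 - c) else 1 with hG
  have hfact : ∀ i : Fin N, G i ≤ ∑ b ∈ t i,
      ((if b = x' i then ENNReal.ofReal c else 0) +
        (if b = x i then ENNReal.ofReal (1 - c) else 0)) := by
    intro i
    by_cases hiκ : i = κ
    · subst hiκ
      rw [hG]
      simp only [if_pos rfl, ht, if_pos (le_refl i)]
      rw [Finset.sum_singleton]
      rw [if_pos hx'κ.symm, hxκ]
      simp
    · by_cases hile : i ≤ κ
      · have hilt : i < κ := lt_of_le_of_ne hile (by simpa using hiκ)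
        have hxi : x i = true := hxlt i hilt
        rw [hG]
        simp only [if_neg hiκ, ht, if_pos hile]
        rw [Finset.sum_singleton, if_pos hxi.symm]
        by_cases hd : x' i = x i
        · rw [if_neg (by simp [hd, hilt])]
          rw [hd, if_pos hxi.symm, ← ENNReal.ofReal_add hc0 (by linarith)]
          simp
        · rw [if_pos ⟨hd, hilt⟩]
          have : x' i = false := by
            cases h : x' i
            · rfl
            · rw [hxi] at hd; exact absurd h hd
          rw [this]
          simp
      · rw [hG]
        simp only [if_neg hiκ, ht, if_neg hile]
        rw [if_neg (fun hcon => hile (le_of_lt hcon.2))]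
        rw [cross_factor_sum x x' hc0 hc1 i]
  refine le_trans ?_ (Finset.prod_le_prod' fun i _ => hfact i)
  -- compute the product of G
  have hκG : G κ = ENNReal.ofReal c := by rw [hG]; simp
  rw [← Finset.mul_prod_erase univ G (Finset.mem_univ κ), hκG]
  have herase : ∀ i ∈ univ.erase κ, G i
      = if x' i ≠ x i ∧ i < κ then ENNReal.ofReal (1 - c) else 1 := by
    intro i hi
    rw [Finset.mem_erase] at hi
    show (if i = κ then ENNReal.ofReal c
      else if x' i ≠ x i ∧ i < κ then ENNReal.ofReal (1 - c) else 1) = _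
    rw [if_neg hi.1]
  rw [Finset.prod_congr rfl herase, Finset.prod_ite, Finset.prod_const, Finset.prod_const_one,
    mul_one]
  have hm : ((univ.erase κ).filter fun i => x' i ≠ x i ∧ i < κ).card ≤ ℓ := by
    refine le_trans (Finset.card_le_card ?_) hcard
    intro i hi
    rw [Finset.mem_filter] at hi ⊢
    exact ⟨Finset.mem_univ i, hi.2.1⟩
  have hpow : ENNReal.ofReal (1 - c) ^ ℓ
      ≤ ENNReal.ofReal (1 - c) ^ (((univ.erase κ).filter fun i => x' i ≠ x i ∧ i < κ).card) :=
    pow_le_pow_of_le_one zero_le (by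
      rw [← ENNReal.ofReal_one]
      exact ENNReal.ofReal_le_ofReal (by linarith)) hm
  calc ENNReal.ofReal (c * (1 - c) ^ ℓ)
      = ENNReal.ofReal c * ENNReal.ofReal (1 - c) ^ ℓ := by
        rw [ENNReal.ofReal_mul hc0, ENNReal.ofReal_pow (by linarith)]
    _ ≤ _ := mul_le_mul_right hpow _

lemma mut_lower_count (x : Fin N → Bool) (κ : Fin N) {ℓ : ℕ} (hℓ1 : 1 ≤ ℓ) (hℓN : ℓ ≤ N) :
    (N - 1).choose (ℓ - 1) ≤ (univ.filter fun z : Fin N → Bool =>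
      (univ.filter fun i => z i ≠ x i).card = ℓ ∧ z κ ≠ x κ).card := by
  classical
  have hinj := Finset.card_le_card_of_injOn
    (f := fun D : Finset (Fin N) => fun i => if i ∈ insert κ D then !(x i) else x i)
    (s := Finset.powersetCard (ℓ - 1) ((univ : Finset (Fin N)).erase κ))
    (t := univ.filter fun z : Fin N → Bool =>
      (univ.filter fun i => z i ≠ x i).card = ℓ ∧ z κ ≠ x κ)
    (by
      intro D hD
      rw [Finset.mem_coe, Finset.mem_powersetCard] at hD
      have hκD : κ ∉ D := fun h => by
        have := hD.1 h
        rw [Finset.mem_erase] at this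
        exact this.1 rfl
      have hdiff : (univ.filter fun i =>
          (if i ∈ insert κ D then !(x i) else x i) ≠ x i) = insert κ D := by
        ext i
        rw [Finset.mem_filter]
        constructor
        · intro h
          by_contra hcon
          rw [if_neg hcon] at h
          exact h.2 rfl
        · intro h
          refine ⟨Finset.mem_univ i, ?_⟩
          rw [if_pos h]
          exact Bool.not_ne_self (x i)
      rw [Finset.mem_coe, Finset.mem_filter]
      refine ⟨Finset.mem_univ _, ?_, ?_⟩
      · rw [hdiff, Finset.card_insert_of_notMem hκD, hD.2]
        omega
      · show (if κ ∈ insert κ D then !(x κ) else x κ) ≠ x κ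
        rw [if_pos (Finset.mem_insert_self κ D)]
        exact Bool.not_ne_self (x κ))
    (by
      intro D1 hD1 D2 hD2 he
      simp only [Finset.mem_coe, Finset.mem_powersetCard] at hD1 hD2
      have hκ1 : κ ∉ D1 := fun h => by
        have := hD1.1 h; rw [Finset.mem_erase] at this; exact this.1 rfl
      have hκ2 : κ ∉ D2 := fun h => by
        have := hD2.1 h; rw [Finset.mem_erase] at this; exact this.1 rfl
      have hins : insert κ D1 = insert κ D2 := by
        ext i
        have hei : (if i ∈ insert κ D1 then !(x i) else x i)
            = (if i ∈ insert κ D2 then !(x i) else x i) := congrFun he i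
        by_cases h1 : i ∈ insert κ D1 <;> by_cases h2 : i ∈ insert κ D2
        · simp [h1, h2]
        · rw [if_pos h1, if_neg h2] at hei
          exact absurd hei.symm (Bool.not_ne_self (x i)).symm
        · rw [if_neg h1, if_pos h2] at hei
          exact absurd hei (Bool.not_ne_self (x i)).symm
        · simp [h1, h2]
      have : D1 = (insert κ D1).erase κ := by rw [Finset.erase_insert hκ1]
      rw [this, hins, Finset.erase_insert hκ2])
  rwa [Finset.card_powersetCard, Finset.card_erase_of_mem (Finset.mem_univ κ),
    Finset.card_univ, Fintype.card_fin] at hinj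

end Struct

section Step

variable {N : ℕ}

lemma powMass_mem {β : ℝ} {u i : ℕ} (h : powMass β u i ≠ 0) : 1 ≤ i ∧ i ≤ u := by
  by_contra hcon
  apply h
  unfold powMass
  rw [if_neg (by rw [Finset.mem_Icc]; omega)]

lemma ind_sum (f : (Fin N → Bool) → ℝ) (x yw : Fin N → Bool) :
    ∑' y : Fin N → Bool, (if f x ≤ f yw then (if y = yw then (1 : ℝ≥0∞) else 0)
      else (if y = x then 1 else 0)) = 1 := by
  rw [tsum_fintype]
  by_cases h : f x ≤ f yw
  · simp only [if_pos h]
    rw [Finset.sum_ite_eq' univ yw (fun _ => (1 : ℝ≥0∞))]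
    simp
  · simp only [if_neg h]
    rw [Finset.sum_ite_eq' univ x (fun _ => (1 : ℝ≥0∞))]
    simp

lemma inner_sum_le_one (f : (Fin N → Bool) → ℝ) (x : Fin N → Bool) (lam ℓ : ℕ)
    {c : ℝ} (hc0 : 0 ≤ c) (hc1 : c ≤ 1) :
    ∑' (y : Fin N → Bool) (x' : Fin N → Bool), bestOfMass f lam (mutMass x ℓ) x' *
      ∑' yw : Fin N → Bool, bestOfMass f lam (crossMass x x' c) yw *
        (if f x ≤ f yw then (if y = yw then (1 : ℝ≥0∞) else 0)
          else (if y = x then 1 else 0)) ≤ 1 := by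
  rw [ENNReal.tsum_comm]
  have h1 : ∀ x' : Fin N → Bool,
      ∑' y : Fin N → Bool, bestOfMass f lam (mutMass x ℓ) x' *
        ∑' yw : Fin N → Bool, bestOfMass f lam (crossMass x x' c) yw *
          (if f x ≤ f yw then (if y = yw then (1 : ℝ≥0∞) else 0)
            else (if y = x then 1 else 0))
      = bestOfMass f lam (mutMass x ℓ) x' *
          ∑' yw : Fin N → Bool, bestOfMass f lam (crossMass x x' c) yw := by
    intro x'
    rw [ENNReal.tsum_mul_left]
    congr 1
    rw [ENNReal.tsum_comm]
    refine tsum_congr fun yw => ?_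
    rw [ENNReal.tsum_mul_left, ind_sum f x yw, mul_one]
  rw [tsum_congr h1]
  have h2 : ∀ x' : Fin N → Bool,
      (∑' yw : Fin N → Bool, bestOfMass f lam (crossMass x x' c) yw) ≤ 1 := by
    intro x'
    rw [tsum_fintype]
    exact bestOfMass_sum_le f lam _ (le_of_eq (crossMass_sum x x' hc0 hc1))
  calc ∑' x' : Fin N → Bool, bestOfMass f lam (mutMass x ℓ) x' *
        ∑' yw : Fin N → Bool, bestOfMass f lam (crossMass x x' c) yw
      ≤ ∑' x' : Fin N → Bool, bestOfMass f lam (mutMass x ℓ) x' * 1 :=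
        ENNReal.tsum_le_tsum fun x' => mul_le_mul_right (h2 x') _
    _ = ∑' x' : Fin N → Bool, bestOfMass f lam (mutMass x ℓ) x' := by simp
    _ ≤ 1 := by
        rw [tsum_fintype]
        exact bestOfMass_sum_le f lam _ (mutMass_sum_le x ℓ)

lemma gaStep_zero (βl βp βc : ℝ) (ul up uc : ℕ) (f : (Fin N → Bool) → ℝ)
    (x y : Fin N → Bool) (h : f y < f x) :
    gaStep N βl βp βc ul up uc f x y = 0 := by
  have key : ∀ yw : Fin N → Bool,
      (if f x ≤ f yw then (if y = yw then (1 : ℝ≥0∞) else 0)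
        else (if y = x then 1 else 0)) = 0 := by
    intro yw
    by_cases h1 : f x ≤ f yw
    · rw [if_pos h1, if_neg (fun hy : y = yw => absurd h1 (not_le.2 (hy ▸ h)))]
    · rw [if_neg h1, if_neg (fun hy : y = x => (lt_irrefl (f x)) (hy ▸ h))]
  unfold gaStep
  simp only [key, mul_zero, tsum_zero]

lemma gaStep_factored (βl βp βc : ℝ) (ul up uc : ℕ) (f : (Fin N → Bool) → ℝ)
    (x : Fin N → Bool) :
    ∑' y : Fin N → Bool, gaStep N βl βp βc ul up uc f x y
    = ∑' P : ℕ, powMass βp up P * ∑' Q : ℕ, powMass βc uc Q *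
        ∑' lam : ℕ, powMass βl ul lam *
          ∑' ℓ : ℕ, binomMass N ((P : ℝ) / Real.sqrt N) ℓ *
            ∑' (y : Fin N → Bool) (x' : Fin N → Bool),
              bestOfMass f lam (mutMass x ℓ) x' *
                ∑' yw : Fin N → Bool,
                  bestOfMass f lam (crossMass x x' ((Q : ℝ) / Real.sqrt N)) yw *
                    (if f x ≤ f yw then (if y = yw then (1 : ℝ≥0∞) else 0)
                      else (if y = x then 1 else 0)) := by
  unfold gaStep
  rw [ENNReal.tsum_comm]
  conv_lhs => enter [1, P]; rw [ENNReal.tsum_comm]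
  conv_lhs => enter [1, P, 1, Q]; rw [ENNReal.tsum_comm]
  conv_lhs => enter [1, P, 1, Q, 1, lam]; rw [ENNReal.tsum_comm]
  conv_lhs => enter [1, P, 1, Q, 1, lam, 1, ℓ]; rw [ENNReal.tsum_mul_left]; rw [mul_assoc]
  conv_lhs => enter [1, P, 1, Q, 1, lam]; rw [ENNReal.tsum_mul_left]; rw [mul_assoc]
  conv_lhs => enter [1, P, 1, Q]; rw [ENNReal.tsum_mul_left]; rw [mul_assoc]
  conv_lhs => enter [1, P]; rw [ENNReal.tsum_mul_left]

lemma gaStep_total_le (βl βp βc : ℝ) (ul up uc : ℕ) (hN : 1 ≤ N)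
    (hup : (up : ℝ) ≤ Real.sqrt N) (huc : (uc : ℝ) ≤ Real.sqrt N)
    (f : (Fin N → Bool) → ℝ) (x : Fin N → Bool) :
    ∑' y : Fin N → Bool, gaStep N βl βp βc ul up uc f x y ≤ 1 := by
  rw [gaStep_factored]
  have hNp : (0 : ℝ) < N := by
    have : (1 : ℝ) ≤ N := by exact_mod_cast hN
    linarith
  have hsq : (0 : ℝ) < Real.sqrt N := Real.sqrt_pos.2 hNp
  refine le_trans (ENNReal.tsum_le_tsum fun P => ?_) (powMass_tsum_le_one βp up)
  by_cases hP : powMass βp up P = 0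
  · rw [hP, zero_mul]
  · have hPm := powMass_mem hP
    have hp0 : 0 ≤ (P : ℝ) / Real.sqrt N := by positivity
    have hp1 : (P : ℝ) / Real.sqrt N ≤ 1 := by
      rw [div_le_one hsq]
      calc (P : ℝ) ≤ (up : ℝ) := by exact_mod_cast hPm.2
        _ ≤ Real.sqrt N := hup
    have hS : (∑' Q : ℕ, powMass βc uc Q *
        ∑' lam : ℕ, powMass βl ul lam *
          ∑' ℓ : ℕ, binomMass N ((P : ℝ) / Real.sqrt N) ℓ *
            ∑' (y : Fin N → Bool) (x' : Fin N → Bool),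
              bestOfMass f lam (mutMass x ℓ) x' *
                ∑' yw : Fin N → Bool,
                  bestOfMass f lam (crossMass x x' ((Q : ℝ) / Real.sqrt N)) yw *
                    (if f x ≤ f yw then (if y = yw then (1 : ℝ≥0∞) else 0)
                      else (if y = x then 1 else 0))) ≤ 1 := by
      refine le_trans (ENNReal.tsum_le_tsum fun Q => ?_) (powMass_tsum_le_one βc uc)
      by_cases hQ : powMass βc uc Q = 0
      · rw [hQ, zero_mul]
      · have hQm := powMass_mem hQ
        have hc0 : 0 ≤ (Q : ℝ) / Real.sqrt N := by positivity
        have hc1 : (Q : ℝ) / Real.sqrt N ≤ 1 := by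
          rw [div_le_one hsq]
          calc (Q : ℝ) ≤ (uc : ℝ) := by exact_mod_cast hQm.2
            _ ≤ Real.sqrt N := huc
        have hS2 : (∑' lam : ℕ, powMass βl ul lam *
            ∑' ℓ : ℕ, binomMass N ((P : ℝ) / Real.sqrt N) ℓ *
              ∑' (y : Fin N → Bool) (x' : Fin N → Bool),
                bestOfMass f lam (mutMass x ℓ) x' *
                  ∑' yw : Fin N → Bool,
                    bestOfMass f lam (crossMass x x' ((Q : ℝ) / Real.sqrt N)) yw *
                      (if f x ≤ f yw then (if y = yw then (1 : ℝ≥0∞) else 0)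
                        else (if y = x then 1 else 0))) ≤ 1 := by
          refine le_trans (ENNReal.tsum_le_tsum fun lam => ?_) (powMass_tsum_le_one βl ul)
          have hS3 : (∑' ℓ : ℕ, binomMass N ((P : ℝ) / Real.sqrt N) ℓ *
              ∑' (y : Fin N → Bool) (x' : Fin N → Bool),
                bestOfMass f lam (mutMass x ℓ) x' *
                  ∑' yw : Fin N → Bool,
                    bestOfMass f lam (crossMass x x' ((Q : ℝ) / Real.sqrt N)) yw *
                      (if f x ≤ f yw then (if y = yw then (1 : ℝ≥0∞) else 0)
                        else (if y = x then 1 else 0))) ≤ 1 := by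
            refine le_trans (ENNReal.tsum_le_tsum fun ℓ => ?_)
              (binomMass_tsum_le_one (N := N) hp0 hp1)
            calc binomMass N ((P : ℝ) / Real.sqrt N) ℓ * _
                ≤ binomMass N ((P : ℝ) / Real.sqrt N) ℓ * 1 :=
                  mul_le_mul_right (inner_sum_le_one f x lam ℓ hc0 hc1) _
              _ = binomMass N ((P : ℝ) / Real.sqrt N) ℓ := mul_one _
          calc powMass βl ul lam * _ ≤ powMass βl ul lam * 1 :=
              mul_le_mul_right hS3 _
            _ = powMass βl ul lam := mul_one _
        calc powMass βc uc Q * _ ≤ powMass βc uc Q * 1 := mul_le_mul_right hS2 _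
          _ = powMass βc uc Q := mul_one _
    calc powMass βp up P * _ ≤ powMass βp up P * 1 := mul_le_mul_right hS _
      _ = powMass βp up P := mul_one _

lemma choose_cast_id {N ℓ : ℕ} (hℓ1 : 1 ≤ ℓ) (hℓN : ℓ ≤ N) :
    (ℓ : ℝ) * (N.choose ℓ : ℝ) = (N : ℝ) * ((N - 1).choose (ℓ - 1) : ℝ) := by
  have h1 : ℓ * N.choose ℓ = N * (N - 1).choose (ℓ - 1) := by
    obtain ⟨n, rfl⟩ : ∃ n, N = n + 1 := ⟨N - 1, by omega⟩
    obtain ⟨k, rfl⟩ : ∃ k, ℓ = k + 1 := ⟨ℓ - 1, by omega⟩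
    have := Nat.add_one_mul_choose_eq n k
    simpa [Nat.add_sub_cancel, mul_comm] using this.symm
  exact_mod_cast congrArg (fun m : ℕ => (m : ℝ)) h1

lemma improve_inner {N : ℕ} (x : Fin N → Bool)
    (κ : Fin N) (hκf : x κ = false) (hκlt : ∀ j, j < κ → x j = true)
    (hκlv : lv N x = κ.val)
    {ℓ : ℕ} (hℓN : ℓ ≤ N) {c : ℝ} (hc0 : 0 ≤ c) (hc1 : c ≤ 1) :
    ENNReal.ofReal (((ℓ : ℝ) / N) * (c * (1 - c) ^ ℓ))
      ≤ ∑ y ∈ univ.filter (fun y : Fin N → Bool => lv N x < lv N y),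
          ∑' x' : Fin N → Bool, bestOfMass (leadingOnes N) 1 (mutMass x ℓ) x' *
            ∑' yw : Fin N → Bool, bestOfMass (leadingOnes N) 1 (crossMass x x' c) yw *
              (if leadingOnes N x ≤ leadingOnes N yw then (if y = yw then (1 : ℝ≥0∞) else 0)
                else (if y = x then 1 else 0)) := by
  classical
  rcases Nat.eq_zero_or_pos ℓ with hℓ0 | hℓ1
  · subst hℓ0
    simp
  -- rewrite the double sum
  have hswap : ∑ y ∈ univ.filter (fun y : Fin N → Bool => lv N x < lv N y),
      ∑' x' : Fin N → Bool, bestOfMass (leadingOnes N) 1 (mutMass x ℓ) x' *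
        ∑' yw : Fin N → Bool, bestOfMass (leadingOnes N) 1 (crossMass x x' c) yw *
          (if leadingOnes N x ≤ leadingOnes N yw then (if y = yw then (1 : ℝ≥0∞) else 0)
            else (if y = x then 1 else 0))
      = ∑ x' : Fin N → Bool, mutMass x ℓ x' *
          ∑ yw : Fin N → Bool, crossMass x x' c yw *
            ∑ y ∈ univ.filter (fun y : Fin N → Bool => lv N x < lv N y),
              (if leadingOnes N x ≤ leadingOnes N yw then (if y = yw then (1 : ℝ≥0∞) else 0)
                else (if y = x then 1 else 0)) := by
    simp only [bestOfMass_one, tsum_fintype]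
    rw [Finset.sum_comm]
    refine Finset.sum_congr rfl fun x' _ => ?_
    rw [← Finset.mul_sum]
    congr 1
    rw [Finset.sum_comm]
    refine Finset.sum_congr rfl fun yw _ => ?_
    rw [← Finset.mul_sum]
  rw [hswap]
  have hind : ∀ yw : Fin N → Bool,
      (∑ y ∈ univ.filter (fun y : Fin N → Bool => lv N x < lv N y),
        (if leadingOnes N x ≤ leadingOnes N yw then (if y = yw then (1 : ℝ≥0∞) else 0)
          else (if y = x then 1 else 0)))
      = (if lv N x < lv N yw then (1 : ℝ≥0∞) else 0) := by
    intro yw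
    by_cases hf : leadingOnes N x ≤ leadingOnes N yw
    · simp only [if_pos hf]
      rw [Finset.sum_ite_eq' (univ.filter fun y : Fin N → Bool => lv N x < lv N y) yw
        (fun _ => (1 : ℝ≥0∞))]
      simp
    · simp only [if_neg hf]
      have hlt : lv N yw < lv N x := by
        have : leadingOnes N yw < leadingOnes N x := not_le.1 hf
        unfold leadingOnes at this
        unfold lv
        exact_mod_cast this
      rw [Finset.sum_ite_eq' (univ.filter fun y : Fin N → Bool => lv N x < lv N y) x
        (fun _ => (1 : ℝ≥0∞))]
      rw [if_neg (by simp)]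
      rw [if_neg (by omega)]
  have hyw : ∀ x' : Fin N → Bool,
      (∑ yw : Fin N → Bool, crossMass x x' c yw *
        ∑ y ∈ univ.filter (fun y : Fin N → Bool => lv N x < lv N y),
          (if leadingOnes N x ≤ leadingOnes N yw then (if y = yw then (1 : ℝ≥0∞) else 0)
            else (if y = x then 1 else 0)))
      = ∑ yw ∈ univ.filter (fun yw : Fin N → Bool => lv N x < lv N yw),
          crossMass x x' c yw := by
    intro x'
    rw [Finset.sum_congr rfl fun yw _ => by rw [hind yw]]
    rw [Finset.sum_congr rfl fun yw (_ : yw ∈ univ) => mul_ite_zero ..]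
    rw [← Finset.sum_filter]
    exact Finset.sum_congr rfl fun yw _ => mul_one _
  rw [Finset.sum_congr rfl fun x' _ => by rw [hyw x']]
  -- restrict to good mutants
  set G := univ.filter (fun z : Fin N → Bool =>
    (univ.filter fun i => z i ≠ x i).card = ℓ ∧ z κ ≠ x κ) with hG
  have hsub : G ⊆ univ := Finset.subset_univ G
  refine le_trans ?_ (Finset.sum_le_sum_of_subset hsub)
  -- on G, the mutation mass is the inverse binomial coefficient
  have hmut : ∀ x' ∈ G, mutMass x ℓ x' = ((N.choose ℓ : ℝ≥0∞))⁻¹ := by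
    intro x' hx'
    rw [hG, Finset.mem_filter] at hx'
    unfold mutMass
    rw [if_pos hx'.2.1]
  -- crossover lower bound on G
  have hcross : ∀ x' ∈ G,
      ENNReal.ofReal (c * (1 - c) ^ ℓ) ≤
        ∑ yw ∈ univ.filter (fun yw : Fin N → Bool => lv N x < lv N yw),
          crossMass x x' c yw := by
    intro x' hx'
    rw [hG, Finset.mem_filter] at hx'
    have hx'κ : x' κ = true := by
      have := hx'.2.2
      rw [hκf] at this
      cases h : x' κ
      · exact absurd h this
      · rfl
    refine le_trans (cross_lower x x' hc0 hc1 κ hκf hκlt hx'κ ℓ (le_of_eq hx'.2.1)) ?_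
    apply Finset.sum_le_sum_of_subset
    intro yw hyw'
    rw [Finset.mem_filter] at hyw' ⊢
    refine ⟨Finset.mem_univ _, ?_⟩
    have := lv_ge_of_prefix yw κ hyw'.2
    omega
  have hmid : ∑ _x' ∈ G, ((N.choose ℓ : ℝ≥0∞))⁻¹ * ENNReal.ofReal (c * (1 - c) ^ ℓ)
      ≤ ∑ x' ∈ G, mutMass x ℓ x' *
          ∑ yw ∈ univ.filter (fun yw : Fin N → Bool => lv N x < lv N yw),
            crossMass x x' c yw :=
    Finset.sum_le_sum fun x' hx' => by
      rw [hmut x' hx']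
      exact mul_le_mul_right (hcross x' hx') _
  refine le_trans ?_ hmid
  -- count good mutants
  rw [Finset.sum_const]
  have hcount := mut_lower_count x κ hℓ1 hℓN
  have hchoose : 0 < N.choose ℓ := Nat.choose_pos hℓN
  -- final real computation
  have hreal : ((ℓ : ℝ) / N) * (c * (1 - c) ^ ℓ)
      ≤ ((N - 1).choose (ℓ - 1) : ℝ) * ((N.choose ℓ : ℝ)⁻¹ * (c * (1 - c) ^ ℓ)) := by
    have hid := choose_cast_id hℓ1 hℓN
    have hN0 : (0 : ℝ) < N := by
      have h00 : 0 < N := lt_of_lt_of_le hℓ1 hℓN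
      exact_mod_cast h00
    have hch0 : (0 : ℝ) < (N.choose ℓ : ℝ) := by exact_mod_cast hchoose
    have hfrac : (ℓ : ℝ) / N = ((N - 1).choose (ℓ - 1) : ℝ) * (N.choose ℓ : ℝ)⁻¹ := by
      rw [div_eq_iff (ne_of_gt hN0)]
      field_simp
      linarith [hid]
    rw [hfrac, mul_assoc]
  calc ENNReal.ofReal (((ℓ : ℝ) / N) * (c * (1 - c) ^ ℓ))
      ≤ ENNReal.ofReal (((N - 1).choose (ℓ - 1) : ℝ) *
          ((N.choose ℓ : ℝ)⁻¹ * (c * (1 - c) ^ ℓ))) := ENNReal.ofReal_le_ofReal hreal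
    _ = ((N - 1).choose (ℓ - 1) : ℝ≥0∞) *
          (((N.choose ℓ : ℝ≥0∞))⁻¹ * ENNReal.ofReal (c * (1 - c) ^ ℓ)) := by
        rw [ENNReal.ofReal_mul (Nat.cast_nonneg _), ENNReal.ofReal_mul (by positivity)]
        rw [ENNReal.ofReal_natCast]
        congr 2
        rw [ENNReal.ofReal_inv_of_pos (by exact_mod_cast hchoose), ENNReal.ofReal_natCast]
    _ ≤ (G.card : ℝ≥0∞) * (((N.choose ℓ : ℝ≥0∞))⁻¹ * ENNReal.ofReal (c * (1 - c) ^ ℓ)) := by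
        apply mul_le_mul_left
        exact_mod_cast Nat.cast_le.2 hcount
    _ = G.card • (((N.choose ℓ : ℝ≥0∞))⁻¹ * ENNReal.ofReal (c * (1 - c) ^ ℓ)) := by
        rw [nsmul_eq_mul]

lemma gaStep_improve {N : ℕ} (hN : 2 ≤ N) (βl βp βc : ℝ) (hβl : 1 < βl) (hβp : 1 < βp)
    (hβc : 1 < βc) (ul up uc : ℕ) (hul : 1 ≤ ul) (hup1 : 1 ≤ up) (huc1 : 1 ≤ uc)
    (x : Fin N → Bool) (hx : x ≠ fun _ => true) :
    ENNReal.ofReal ((Zb βp)⁻¹ * (Zb βc)⁻¹ * (Zb βl)⁻¹ * (1 / (16 * (N : ℝ))))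
      ≤ ∑ y ∈ univ.filter (fun y : Fin N → Bool => lv N x < lv N y),
          gaStep N βl βp βc ul up uc (leadingOnes N) x y := by
  classical
  obtain ⟨κ, hκf, hκlt, hκlv⟩ := exists_first_zero x hx
  have hN0 : (0 : ℝ) < N := by
    have : (2 : ℝ) ≤ N := by exact_mod_cast hN
    linarith
  have hsq : (0 : ℝ) < Real.sqrt N := Real.sqrt_pos.2 hN0
  have hsq1 : (1 : ℝ) ≤ Real.sqrt N := by
    rw [show (1 : ℝ) = Real.sqrt 1 from Real.sqrt_one.symm]
    exact Real.sqrt_le_sqrt (by exact_mod_cast le_trans (by norm_num) hN)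
  have hc0 : (0 : ℝ) ≤ 1 / Real.sqrt N := by positivity
  have hc1 : 1 / Real.sqrt N ≤ 1 := by
    rw [div_le_one hsq]; exact hsq1
  have hsel : ∀ y : Fin N → Bool,
      (∑' ℓ : ℕ, powMass βp up 1 * powMass βc uc 1 * powMass βl ul 1 *
        binomMass N (1 / Real.sqrt N) ℓ *
        ∑' x' : Fin N → Bool, bestOfMass (leadingOnes N) 1 (mutMass x ℓ) x' *
          ∑' yw : Fin N → Bool,
            bestOfMass (leadingOnes N) 1 (crossMass x x' (1 / Real.sqrt N)) yw *
              (if leadingOnes N x ≤ leadingOnes N yw then (if y = yw then (1 : ℝ≥0∞) else 0)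
                else (if y = x then 1 else 0)))
      ≤ gaStep N βl βp βc ul up uc (leadingOnes N) x y := by
    intro y
    unfold gaStep
    refine le_trans ?_ (ENNReal.le_tsum 1)
    refine le_trans ?_ (ENNReal.le_tsum 1)
    refine le_trans ?_ (ENNReal.le_tsum 1)
    simp only [Nat.cast_one]
    exact le_rfl
  refine le_trans ?_ (Finset.sum_le_sum fun y _ => hsel y)
  rw [← Summable.tsum_finsetSum (fun (y : Fin N → Bool) _ => ENNReal.summable)]
  have hfac : ∀ ℓ : ℕ, (∑ y ∈ univ.filter (fun y : Fin N → Bool => lv N x < lv N y),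
      powMass βp up 1 * powMass βc uc 1 * powMass βl ul 1 *
        binomMass N (1 / Real.sqrt N) ℓ *
        ∑' x' : Fin N → Bool, bestOfMass (leadingOnes N) 1 (mutMass x ℓ) x' *
          ∑' yw : Fin N → Bool,
            bestOfMass (leadingOnes N) 1 (crossMass x x' (1 / Real.sqrt N)) yw *
              (if leadingOnes N x ≤ leadingOnes N yw then (if y = yw then (1 : ℝ≥0∞) else 0)
                else (if y = x then 1 else 0)))
      = powMass βp up 1 * powMass βc uc 1 * powMass βl ul 1 *
          binomMass N (1 / Real.sqrt N) ℓ *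
          ∑ y ∈ univ.filter (fun y : Fin N → Bool => lv N x < lv N y),
            ∑' x' : Fin N → Bool, bestOfMass (leadingOnes N) 1 (mutMass x ℓ) x' *
              ∑' yw : Fin N → Bool,
                bestOfMass (leadingOnes N) 1 (crossMass x x' (1 / Real.sqrt N)) yw *
                  (if leadingOnes N x ≤ leadingOnes N yw then (if y = yw then (1 : ℝ≥0∞) else 0)
                    else (if y = x then 1 else 0)) := fun ℓ => (Finset.mul_sum _ _ _).symm
  rw [tsum_congr hfac]
  refine le_trans ?_ (Summable.sum_le_tsum (range (N + 1)) (fun _ _ => zero_le) ENNReal.summable)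
  -- pointwise bound on the finite sum
  have hzp : (0 : ℝ) ≤ (Zb βp)⁻¹ := inv_nonneg.2 (by linarith [one_le_Zb hβp])
  have hzc : (0 : ℝ) ≤ (Zb βc)⁻¹ := inv_nonneg.2 (by linarith [one_le_Zb hβc])
  have hzl : (0 : ℝ) ≤ (Zb βl)⁻¹ := inv_nonneg.2 (by linarith [one_le_Zb hβl])
  have hterm : ∀ ℓ ∈ range (N + 1),
      ENNReal.ofReal ((Zb βp)⁻¹ * (Zb βc)⁻¹ * (Zb βl)⁻¹ *
        ((N.choose ℓ : ℝ) * (1 / Real.sqrt N) ^ ℓ * (1 - 1 / Real.sqrt N) ^ (N - ℓ) *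
          (((ℓ : ℝ) / N) * (1 / Real.sqrt N * (1 - 1 / Real.sqrt N) ^ ℓ))))
      ≤ powMass βp up 1 * powMass βc uc 1 * powMass βl ul 1 *
          binomMass N (1 / Real.sqrt N) ℓ *
          ∑ y ∈ univ.filter (fun y : Fin N → Bool => lv N x < lv N y),
            ∑' x' : Fin N → Bool, bestOfMass (leadingOnes N) 1 (mutMass x ℓ) x' *
              ∑' yw : Fin N → Bool,
                bestOfMass (leadingOnes N) 1 (crossMass x x' (1 / Real.sqrt N)) yw *
                  (if leadingOnes N x ≤ leadingOnes N yw then (if y = yw then (1 : ℝ≥0∞) else 0)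
                    else (if y = x then 1 else 0)) := by
    intro ℓ hℓ
    rw [Finset.mem_range] at hℓ
    have hℓN : ℓ ≤ N := Nat.lt_succ_iff.1 hℓ
    have hbinom : binomMass N (1 / Real.sqrt N) ℓ
        = ENNReal.ofReal ((N.choose ℓ : ℝ) * (1 / Real.sqrt N) ^ ℓ *
            (1 - 1 / Real.sqrt N) ^ (N - ℓ)) := by
      unfold binomMass
      rw [if_pos hℓN]
    have hbr : (0 : ℝ) ≤ (N.choose ℓ : ℝ) * (1 / Real.sqrt N) ^ ℓ *
        (1 - 1 / Real.sqrt N) ^ (N - ℓ) :=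
      mul_nonneg (mul_nonneg (Nat.cast_nonneg _) (pow_nonneg hc0 _))
        (pow_nonneg (by linarith) _)
    have hinner := improve_inner x κ hκf hκlt hκlv hℓN hc0 hc1
    calc ENNReal.ofReal ((Zb βp)⁻¹ * (Zb βc)⁻¹ * (Zb βl)⁻¹ *
          ((N.choose ℓ : ℝ) * (1 / Real.sqrt N) ^ ℓ * (1 - 1 / Real.sqrt N) ^ (N - ℓ) *
            (((ℓ : ℝ) / N) * (1 / Real.sqrt N * (1 - 1 / Real.sqrt N) ^ ℓ))))
        = ENNReal.ofReal ((Zb βp)⁻¹) * ENNReal.ofReal ((Zb βc)⁻¹) *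
            ENNReal.ofReal ((Zb βl)⁻¹) *
            ENNReal.ofReal ((N.choose ℓ : ℝ) * (1 / Real.sqrt N) ^ ℓ *
              (1 - 1 / Real.sqrt N) ^ (N - ℓ)) *
            ENNReal.ofReal (((ℓ : ℝ) / N) * (1 / Real.sqrt N * (1 - 1 / Real.sqrt N) ^ ℓ)) := by
          rw [← ENNReal.ofReal_mul hzp, ← ENNReal.ofReal_mul (mul_nonneg hzp hzc),
            ← ENNReal.ofReal_mul (mul_nonneg (mul_nonneg hzp hzc) hzl),
            ← ENNReal.ofReal_mul (mul_nonneg (mul_nonneg (mul_nonneg hzp hzc) hzl) hbr)]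
          ring_nf
      _ ≤ powMass βp up 1 * powMass βc uc 1 * powMass βl ul 1 *
            binomMass N (1 / Real.sqrt N) ℓ *
            ∑ y ∈ univ.filter (fun y : Fin N → Bool => lv N x < lv N y),
              ∑' x' : Fin N → Bool, bestOfMass (leadingOnes N) 1 (mutMass x ℓ) x' *
                ∑' yw : Fin N → Bool,
                  bestOfMass (leadingOnes N) 1 (crossMass x x' (1 / Real.sqrt N)) yw *
                    (if leadingOnes N x ≤ leadingOnes N yw then (if y = yw then (1 : ℝ≥0∞) else 0)
                      else (if y = x then 1 else 0)) := by
          rw [hbinom]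
          exact mul_le_mul' (mul_le_mul' (mul_le_mul'
            (mul_le_mul' (le_powMass_one hβp hup1) (le_powMass_one hβc huc1))
            (le_powMass_one hβl hul)) le_rfl) hinner
  refine le_trans ?_ (Finset.sum_le_sum hterm)
  -- combine the ofReal terms with key_real_sum
  have hsum_nonneg : ∀ ℓ ∈ range (N + 1), (0 : ℝ) ≤
      (N.choose ℓ : ℝ) * (1 / Real.sqrt N) ^ ℓ * (1 - 1 / Real.sqrt N) ^ (N - ℓ) *
        (((ℓ : ℝ) / N) * (1 / Real.sqrt N * (1 - 1 / Real.sqrt N) ^ ℓ)) := by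
    intro ℓ _
    have h1c : (0 : ℝ) ≤ 1 - 1 / Real.sqrt N := by linarith
    positivity
  calc ENNReal.ofReal ((Zb βp)⁻¹ * (Zb βc)⁻¹ * (Zb βl)⁻¹ * (1 / (16 * (N : ℝ))))
      ≤ ENNReal.ofReal ((Zb βp)⁻¹ * (Zb βc)⁻¹ * (Zb βl)⁻¹ *
          ∑ ℓ ∈ range (N + 1),
            (N.choose ℓ : ℝ) * (1 / Real.sqrt N) ^ ℓ * (1 - 1 / Real.sqrt N) ^ (N - ℓ) *
              (((ℓ : ℝ) / N) * (1 / Real.sqrt N * (1 - 1 / Real.sqrt N) ^ ℓ))) := by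
        apply ENNReal.ofReal_le_ofReal
        apply mul_le_mul_of_nonneg_left (key_real_sum N hN)
        exact mul_nonneg (mul_nonneg hzp hzc) hzl
    _ = ∑ ℓ ∈ range (N + 1), ENNReal.ofReal ((Zb βp)⁻¹ * (Zb βc)⁻¹ * (Zb βl)⁻¹ *
          ((N.choose ℓ : ℝ) * (1 / Real.sqrt N) ^ ℓ * (1 - 1 / Real.sqrt N) ^ (N - ℓ) *
            (((ℓ : ℝ) / N) * (1 / Real.sqrt N * (1 - 1 / Real.sqrt N) ^ ℓ)))) := by
        rw [Finset.mul_sum]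
        rw [ENNReal.ofReal_sum_of_nonneg (fun ℓ hℓ => mul_nonneg
          (mul_nonneg (mul_nonneg hzp hzc) hzl) (hsum_nonneg ℓ hℓ))]

end Step

section Markov

variable {N : ℕ} (βl βp βc : ℝ) (ul up uc : ℕ)

/-- Abbreviation for the marginal of the GA on LeadingOnes. -/
noncomputable def mu (t : ℕ) (x : Fin N → Bool) : ℝ≥0∞ :=
  gaMarginal N βl βp βc ul up uc (leadingOnes N) t x

lemma mu_zero_total (hN : 1 ≤ N) : ∑ x : Fin N → Bool, mu (N := N) βl βp βc ul up uc 0 x = 1 := by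
  unfold mu gaMarginal
  rw [Finset.sum_const, nsmul_eq_mul]
  have hcard : (Fintype.card (Fin N → Bool) : ℝ≥0∞) = (2 : ℝ≥0∞) ^ N := by
    rw [Fintype.card_fun, Fintype.card_fin, Fintype.card_bool]
    push_cast
    rfl
  rw [Finset.card_univ, hcard]
  exact ENNReal.mul_inv_cancel (by positivity) (by simp)

lemma mu_succ (t : ℕ) (y : Fin N → Bool) :
    mu (N := N) βl βp βc ul up uc (t + 1) y
      = ∑ x : Fin N → Bool, mu (N := N) βl βp βc ul up uc t x *
          gaStep N βl βp βc ul up uc (leadingOnes N) x y := by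
  unfold mu
  conv_lhs => rw [gaMarginal]
  exact tsum_fintype _

lemma level_step (hβl : 1 < βl) (hβp : 1 < βp) (hβc : 1 < βc)
    (hN : 2 ≤ N) (hul : 1 ≤ ul) (hup1 : 1 ≤ up) (hup : (up : ℝ) ≤ Real.sqrt N)
    (huc1 : 1 ≤ uc) (huc : (uc : ℝ) ≤ Real.sqrt N) (k : ℕ) (hk : k < N) (t : ℕ) :
    (∑ y ∈ univ.filter (fun y : Fin N → Bool => lv N y ≤ k),
        mu (N := N) βl βp βc ul up uc (t + 1) y)
      + ENNReal.ofReal ((Zb βp)⁻¹ * (Zb βc)⁻¹ * (Zb βl)⁻¹ * (1 / (16 * (N : ℝ)))) *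
          (∑ x ∈ univ.filter (fun x : Fin N → Bool => lv N x = k),
            mu (N := N) βl βp βc ul up uc t x)
    ≤ ∑ x ∈ univ.filter (fun x : Fin N → Bool => lv N x ≤ k),
        mu (N := N) βl βp βc ul up uc t x := by
  classical
  set δ := ENNReal.ofReal ((Zb βp)⁻¹ * (Zb βc)⁻¹ * (Zb βl)⁻¹ * (1 / (16 * (N : ℝ)))) with hδ
  set μ := mu (N := N) βl βp βc ul up uc with hμ
  have hstep1 : ∑ y ∈ univ.filter (fun y : Fin N → Bool => lv N y ≤ k), μ (t + 1) y
      = ∑ x : Fin N → Bool, μ t x *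
          ∑ y ∈ univ.filter (fun y : Fin N → Bool => lv N y ≤ k),
            gaStep N βl βp βc ul up uc (leadingOnes N) x y := by
    rw [Finset.sum_congr rfl fun y _ => mu_succ βl βp βc ul up uc t y]
    rw [Finset.sum_comm]
    exact Finset.sum_congr rfl fun x _ => (Finset.mul_sum _ _ _).symm
  rw [hstep1, Finset.mul_sum]
  have hrhs : ∑ x ∈ univ.filter (fun x : Fin N → Bool => lv N x ≤ k), μ t x
      = ∑ x : Fin N → Bool, (if lv N x ≤ k then μ t x else 0) := by
    rw [Finset.sum_filter]
  rw [hrhs]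
  have hδsum : ∑ x ∈ univ.filter (fun x : Fin N → Bool => lv N x = k), δ * μ t x
      = ∑ x : Fin N → Bool, (if lv N x = k then δ * μ t x else 0) := by
    rw [Finset.sum_filter]
  rw [hδsum, ← Finset.sum_add_distrib]
  apply Finset.sum_le_sum
  intro x _
  have htot : ∑ y : Fin N → Bool, gaStep N βl βp βc ul up uc (leadingOnes N) x y ≤ 1 := by
    rw [← tsum_fintype (L := SummationFilter.unconditional _)]
    exact gaStep_total_le βl βp βc ul up uc (by omega) hup huc (leadingOnes N) x
  have hsplit : ∑ y : Fin N → Bool, gaStep N βl βp βc ul up uc (leadingOnes N) x y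
      = (∑ y ∈ univ.filter (fun y : Fin N → Bool => lv N y ≤ k),
          gaStep N βl βp βc ul up uc (leadingOnes N) x y)
        + ∑ y ∈ univ.filter (fun y : Fin N → Bool => ¬ lv N y ≤ k),
            gaStep N βl βp βc ul up uc (leadingOnes N) x y := by
    rw [← Finset.sum_filter_add_sum_filter_not univ (fun y : Fin N → Bool => lv N y ≤ k)]
  rcases lt_trichotomy (lv N x) k with hx | hx | hx
  · -- lv x < k
    rw [if_neg (by omega), if_pos (le_of_lt hx), add_zero]
    calc μ t x * ∑ y ∈ univ.filter (fun y : Fin N → Bool => lv N y ≤ k),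
          gaStep N βl βp βc ul up uc (leadingOnes N) x y
        ≤ μ t x * 1 := by
          apply mul_le_mul_right
          refine le_trans ?_ htot
          rw [hsplit]
          exact le_self_add
      _ = μ t x := mul_one _
  · -- lv x = k
    rw [if_pos hx, if_pos (le_of_eq hx)]
    have hxne : x ≠ fun _ => true := by
      intro hcon
      rw [← lv_eq_iff_ones] at hcon
      omega
    have himp := gaStep_improve hN βl βp βc hβl hβp hβc ul up uc hul hup1 huc1 x hxne
    have hfeq : (univ.filter fun y : Fin N → Bool => ¬ lv N y ≤ k)
        = univ.filter fun y : Fin N → Bool => lv N x < lv N y := by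
      apply Finset.filter_congr
      intro y _
      constructor
      · intro h; omega
      · intro h; omega
    have hA : (∑ y ∈ univ.filter (fun y : Fin N → Bool => lv N y ≤ k),
          gaStep N βl βp βc ul up uc (leadingOnes N) x y) + δ ≤ 1 := by
      refine le_trans ?_ htot
      rw [hsplit]
      apply add_le_add_right
      rw [hfeq]
      exact himp
    calc μ t x * (∑ y ∈ univ.filter (fun y : Fin N → Bool => lv N y ≤ k),
          gaStep N βl βp βc ul up uc (leadingOnes N) x y) + δ * μ t x
        = μ t x * ((∑ y ∈ univ.filter (fun y : Fin N → Bool => lv N y ≤ k),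
            gaStep N βl βp βc ul up uc (leadingOnes N) x y) + δ) := by ring
      _ ≤ μ t x * 1 := mul_le_mul_right hA _
      _ = μ t x := mul_one _
  · -- lv x > k
    rw [if_neg (by omega), if_neg (by omega), add_zero]
    have hzero : ∀ y ∈ univ.filter (fun y : Fin N → Bool => lv N y ≤ k),
        gaStep N βl βp βc ul up uc (leadingOnes N) x y = 0 := by
      intro y hy
      rw [Finset.mem_filter] at hy
      apply gaStep_zero
      unfold leadingOnes
      have : lv N y < lv N x := by omega
      exact_mod_cast this
    rw [Finset.sum_congr rfl hzero, Finset.sum_const_zero, mul_zero]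

lemma level_bound (hβl : 1 < βl) (hβp : 1 < βp) (hβc : 1 < βc)
    (hN : 2 ≤ N) (hul : 1 ≤ ul) (hup1 : 1 ≤ up) (hup : (up : ℝ) ≤ Real.sqrt N)
    (huc1 : 1 ≤ uc) (huc : (uc : ℝ) ≤ Real.sqrt N) (k : ℕ) (hk : k < N) (T : ℕ) :
    (∑ y ∈ univ.filter (fun y : Fin N → Bool => lv N y ≤ k),
        mu (N := N) βl βp βc ul up uc T y)
      + ENNReal.ofReal ((Zb βp)⁻¹ * (Zb βc)⁻¹ * (Zb βl)⁻¹ * (1 / (16 * (N : ℝ)))) *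
          (∑ t ∈ range T, ∑ x ∈ univ.filter (fun x : Fin N → Bool => lv N x = k),
            mu (N := N) βl βp βc ul up uc t x)
    ≤ 1 := by
  induction T with
  | zero =>
      simp only [Finset.range_zero, Finset.sum_empty, mul_zero, add_zero]
      refine le_trans (Finset.sum_le_sum_of_subset (Finset.subset_univ _)) ?_
      exact le_of_eq (mu_zero_total βl βp βc ul up uc (by omega))
  | succ T ih =>
      have hstep := level_step βl βp βc ul up uc hβl hβp hβc hN hul hup1 hup huc1 huc k hk T
      calc (∑ y ∈ univ.filter (fun y : Fin N → Bool => lv N y ≤ k),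
            mu (N := N) βl βp βc ul up uc (T + 1) y)
          + ENNReal.ofReal ((Zb βp)⁻¹ * (Zb βc)⁻¹ * (Zb βl)⁻¹ * (1 / (16 * (N : ℝ)))) *
              (∑ t ∈ range (T + 1), ∑ x ∈ univ.filter (fun x : Fin N → Bool => lv N x = k),
                mu (N := N) βl βp βc ul up uc t x)
          = ((∑ y ∈ univ.filter (fun y : Fin N → Bool => lv N y ≤ k),
              mu (N := N) βl βp βc ul up uc (T + 1) y)
            + ENNReal.ofReal ((Zb βp)⁻¹ * (Zb βc)⁻¹ * (Zb βl)⁻¹ * (1 / (16 * (N : ℝ)))) *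
                (∑ x ∈ univ.filter (fun x : Fin N → Bool => lv N x = k),
                  mu (N := N) βl βp βc ul up uc T x))
            + ENNReal.ofReal ((Zb βp)⁻¹ * (Zb βc)⁻¹ * (Zb βl)⁻¹ * (1 / (16 * (N : ℝ)))) *
                (∑ t ∈ range T, ∑ x ∈ univ.filter (fun x : Fin N → Bool => lv N x = k),
                  mu (N := N) βl βp βc ul up uc t x) := by
            rw [Finset.sum_range_succ, mul_add]
            ring
        _ ≤ (∑ x ∈ univ.filter (fun x : Fin N → Bool => lv N x ≤ k),
              mu (N := N) βl βp βc ul up uc T x)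
            + ENNReal.ofReal ((Zb βp)⁻¹ * (Zb βc)⁻¹ * (Zb βl)⁻¹ * (1 / (16 * (N : ℝ)))) *
                (∑ t ∈ range T, ∑ x ∈ univ.filter (fun x : Fin N → Bool => lv N x = k),
                  mu (N := N) βl βp βc ul up uc t x) := add_le_add_left hstep _
        _ ≤ 1 := ih

end Markov

end Aux
/-- If `βλ > 1`, `βp > 1` and `βc > 1`, then there is a constant
`C > 0` (depending only on `βλ, βp, βc`) such that for all `N ≥ 2`, `uλ ≥ 1` and
`1 ≤ up, uc ≤ √N`, the heavy-tailed `(1+(λ,λ))` GA maximizing LeadingOnes on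
`{0,1}^N` satisfies `E[T_I] ≤ C·N²`, where `T_I` is the first iteration index
`t ≥ 0` at which the current solution `x_t` is the all-ones string. -/
theorem heavyTailedGA_leadingOnes_runtime (βl βp βc : ℝ)
    (hβl : 1 < βl) (hβp : 1 < βp) (hβc : 1 < βc) :
    ∃ C : ℝ, 0 < C ∧ ∀ N : ℕ, 2 ≤ N → ∀ ul up uc : ℕ,
      1 ≤ ul → 1 ≤ up → (up : ℝ) ≤ Real.sqrt N → 1 ≤ uc → (uc : ℝ) ≤ Real.sqrt N →
      gaExpectedIterations N βl βp βc ul up uc (leadingOnes N)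
          (fun x => x = fun _ => true)
        ≤ ENNReal.ofReal (C * N ^ 2) := by
  classical
  have hZp := one_le_Zb hβp
  have hZc := one_le_Zb hβc
  have hZl := one_le_Zb hβl
  have hCpos : (0 : ℝ) < 16 * Zb βp * Zb βc * Zb βl := by
    have h1 : (1 : ℝ) ≤ Zb βp * Zb βc := by nlinarith
    have h2 : (1 : ℝ) ≤ Zb βp * Zb βc * Zb βl := by nlinarith
    linarith
  refine ⟨16 * Zb βp * Zb βc * Zb βl, hCpos, ?_⟩
  intro N hN ul up uc hul hup1 hup huc1 huc
  have hNR : (0 : ℝ) < N := by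
    have : (2 : ℝ) ≤ N := by exact_mod_cast hN
    linarith
  set ε : ℝ := (Zb βp)⁻¹ * (Zb βc)⁻¹ * (Zb βl)⁻¹ * (1 / (16 * (N : ℝ))) with hε
  have hεpos : 0 < ε := by
    rw [hε]
    have h1 : (0 : ℝ) < (Zb βp)⁻¹ := by positivity
    have h2 : (0 : ℝ) < (Zb βc)⁻¹ := by positivity
    have h3 : (0 : ℝ) < (Zb βl)⁻¹ := by positivity
    positivity
  set δ : ℝ≥0∞ := ENNReal.ofReal ε with hδ
  have hδ0 : δ ≠ 0 := by
    rw [hδ]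
    simp [ENNReal.ofReal_eq_zero, not_le, hεpos]
  -- per-level expected visiting time
  have hlevel : ∀ k, k < N → (∑' t : ℕ,
      ∑ x ∈ univ.filter (fun x : Fin N → Bool => lv N x = k),
        mu (N := N) βl βp βc ul up uc t x) ≤ δ⁻¹ := by
    intro k hk
    apply ENNReal.tsum_le_of_sum_range_le
    intro T
    have hb := level_bound βl βp βc ul up uc hβl hβp hβc hN hul hup1 hup huc1 huc k hk T
    have hδp : δ * (∑ t ∈ range T,
        ∑ x ∈ univ.filter (fun x : Fin N → Bool => lv N x = k),
          mu (N := N) βl βp βc ul up uc t x) ≤ 1 :=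
      le_trans le_add_self hb
    exact ENNReal.le_inv_iff_mul_le.mpr (by rwa [mul_comm] at hδp)
  -- rewrite the expected iterations as a sum over levels
  unfold gaExpectedIterations
  beta_reduce
  have hx_t : ∀ t : ℕ, (∑' x : Fin N → Bool,
      @ite ℝ≥0∞ (x = fun _ => true) (Classical.propDecidable _) 0
        (gaMarginal N βl βp βc ul up uc (leadingOnes N) t x))
      = ∑ k ∈ range N, ∑ x ∈ univ.filter (fun x : Fin N → Bool => lv N x = k),
          mu (N := N) βl βp βc ul up uc t x := by
    intro t
    rw [tsum_fintype]
    have h1 : ∀ x : Fin N → Bool,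
        (@ite ℝ≥0∞ (x = fun _ => true) (Classical.propDecidable _) 0
          (gaMarginal N βl βp βc ul up uc (leadingOnes N) t x))
        = (if ¬ (x = fun _ => true) then mu (N := N) βl βp βc ul up uc t x else 0) := by
      intro x
      by_cases h : x = fun _ => true <;> simp [h, mu]
    rw [Finset.sum_congr rfl fun x _ => h1 x, ← Finset.sum_filter]
    rw [← Finset.sum_fiberwise_of_maps_to (g := lv N) (t := range N)
      (fun x hx => by
        rw [Finset.mem_filter] at hx
        rw [Finset.mem_range]
        have hle := lv_le x
        have hne : lv N x ≠ N := fun hcon => hx.2 ((lv_eq_iff_ones x).1 hcon)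
        omega)]
    refine Finset.sum_congr rfl fun k hk => ?_
    rw [Finset.mem_range] at hk
    have hfib : (univ.filter fun x : Fin N → Bool => ¬ x = (fun _ => true)).filter
        (fun x => lv N x = k) = univ.filter (fun x : Fin N → Bool => lv N x = k) := by
      rw [Finset.filter_filter]
      apply Finset.filter_congr
      intro x _
      constructor
      · exact fun h => h.2
      · intro h
        refine ⟨fun hcon => ?_, h⟩
        rw [← lv_eq_iff_ones] at hcon
        omega
    rw [hfib]
  rw [tsum_congr hx_t, Summable.tsum_finsetSum (fun _ _ => ENNReal.summable)]
  calc ∑ k ∈ range N, ∑' t : ℕ,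
        ∑ x ∈ univ.filter (fun x : Fin N → Bool => lv N x = k),
          mu (N := N) βl βp βc ul up uc t x
      ≤ ∑ _k ∈ range N, δ⁻¹ :=
        Finset.sum_le_sum fun k hk => hlevel k (Finset.mem_range.1 hk)
    _ = (N : ℝ≥0∞) * δ⁻¹ := by
        rw [Finset.sum_const, Finset.card_range, nsmul_eq_mul]
    _ ≤ ENNReal.ofReal (16 * Zb βp * Zb βc * Zb βl * (N : ℝ) ^ 2) := by
        rw [hδ, ← ENNReal.ofReal_inv_of_pos hεpos]
        rw [← ENNReal.ofReal_natCast N, ← ENNReal.ofReal_mul (Nat.cast_nonneg N)]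
        apply ENNReal.ofReal_le_ofReal
        rw [hε]
        have hZp0 : Zb βp ≠ 0 := by linarith
        have hZc0 : Zb βc ≠ 0 := by linarith
        have hZl0 : Zb βl ≠ 0 := by linarith
        rw [show ((Zb βp)⁻¹ * (Zb βc)⁻¹ * (Zb βl)⁻¹ * (1 / (16 * (N : ℝ))))⁻¹
            = 16 * (N : ℝ) * (Zb βp * Zb βc * Zb βl) from by
          field_simp]
        exact le_of_eq (by ring)
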